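/- Assume π > 0, rank(O) = rank(T) = m, and U^T O is invertible. For observation x, define P_{3,x,1} with [P_{3,x,1}]_{ij} = Pr[x_3=i, x_2=x, x_1=j], which satisfies P_{3,x,1} = O A_x T diag(π) O^T where A_x = T diag(O_{x,·}). Then B_x := (U^T P_{3,x,1})(U^T P_{2,1})^+ = (U^T O) A_x (U^T O)^{-1}. -/

import Mathlib

open Matrix

lemma isUnit_of_rank_eq {m : ℕ} (A : Matrix (Fin m) (Fin m) ℝ) (h : A.rank = m) :
    IsUnit A := by
  rw [← Matrix.mulVec_surjective_iff_isUnit]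
  have hr : LinearMap.range A.mulVecLin = ⊤ := by
    apply Submodule.eq_top_of_finrank_eq
    rw [← Matrix.rank, h]
    simp [Module.finrank_pi]
  intro v
  have : v ∈ LinearMap.range A.mulVecLin := hr ▸ Submodule.mem_top
  obtain ⟨w, hw⟩ := this
  exact ⟨w, hw⟩

/-- with `π > 0`, `rank O = rank T = m`, and `Uᵀ O` invertible, the observable
operator `B_x = (Uᵀ P_{3,x,1})(Uᵀ P_{2,1})⁺` satisfies `B_x = (Uᵀ O) A_x (Uᵀ O)⁻¹`,
where `A_x = T diag(O_{x,·})`, `P_{3,x,1} = O A_x T diag(π) Oᵀ`, and `(Uᵀ P_{2,1})⁺` is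
the Moore–Penrose pseudoinverse, characterized by the four Penrose conditions. -/
theorem hmm_Bx_formula (m n : ℕ)
    (T : Matrix (Fin m) (Fin m) ℝ) (O : Matrix (Fin n) (Fin m) ℝ) (π : Fin m → ℝ)
    (hπ : ∀ i, 0 < π i) (hO : O.rank = m) (hT : T.rank = m)
    (U : Matrix (Fin n) (Fin m) ℝ) (hU : IsUnit (Uᵀ * O))
    (x : Fin n)
    (Ax : Matrix (Fin m) (Fin m) ℝ) (hAx : Ax = T * Matrix.diagonal (fun i => O x i))
    (P21 : Matrix (Fin n) (Fin n) ℝ) (hP21 : P21 = O * T * Matrix.diagonal π * Oᵀ)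
    (P3x1 : Matrix (Fin n) (Fin n) ℝ) (hP3x1 : P3x1 = O * Ax * T * Matrix.diagonal π * Oᵀ)
    (M : Matrix (Fin m) (Fin n) ℝ) (hM : M = Uᵀ * P21)
    (X : Matrix (Fin n) (Fin m) ℝ)
    (hX1 : M * X * M = M) (hX2 : X * M * X = X)
    (hX3 : (M * X)ᵀ = M * X) (hX4 : (X * M)ᵀ = X * M)
    (Bx : Matrix (Fin m) (Fin m) ℝ) (hBx : Bx = (Uᵀ * P3x1) * X) :
    Bx = (Uᵀ * O) * Ax * (Uᵀ * O)⁻¹ := by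
  set V := Uᵀ * O with hV
  -- units
  have hTu : IsUnit T := isUnit_of_rank_eq T hT
  have hD : IsUnit (Matrix.diagonal π) := by
    apply (Matrix.isUnit_iff_isUnit_det (Matrix.diagonal π)).mpr
    rw [Matrix.det_diagonal]
    exact IsUnit.of_mul_eq_one (∏ i, (π i)⁻¹) (by
      rw [← Finset.prod_mul_distrib]
      exact Finset.prod_eq_one (fun i _ => mul_inv_cancel₀ (hπ i).ne'))
  have hVTD : IsUnit ((V * T) * Matrix.diagonal π) := ((hU.mul hTu).mul hD)
  -- M = (V*T*diagπ) * Oᵀ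
  have hM' : M = ((V * T) * Matrix.diagonal π) * Oᵀ := by
    simp only [hM, hP21, hV, Matrix.mul_assoc]
  -- rank M = m
  have hrank : M.rank = m := by
    rw [hM', Matrix.rank_mul_eq_right_of_isUnit_det _ _
      ((Matrix.isUnit_iff_isUnit_det _).mp hVTD), Matrix.rank_transpose, hO]
  -- mulVec M surjective
  have hsurj : Function.Surjective M.mulVec := by
    have hr : LinearMap.range M.mulVecLin = ⊤ := by
      apply Submodule.eq_top_of_finrank_eq
      rw [← Matrix.rank, hrank]
      simp [Module.finrank_pi]
    intro v
    have : v ∈ LinearMap.range M.mulVecLin := hr ▸ Submodule.mem_top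
    obtain ⟨w, hw⟩ := this
    exact ⟨w, hw⟩
  -- M * X = 1
  have hMX : M * X = 1 := by
    apply Matrix.toLin'.injective
    apply LinearMap.ext
    intro v
    obtain ⟨w, hw⟩ := hsurj v
    simp only [Matrix.toLin'_apply, Matrix.one_mulVec]
    rw [← hw, Matrix.mulVec_mulVec, hX1]
  -- deduce (T * diagπ * Oᵀ) * X = V⁻¹
  have hVinv : (T * Matrix.diagonal π * Oᵀ) * X = V⁻¹ := by
    have h1 : V * ((T * Matrix.diagonal π * Oᵀ) * X) = 1 := by
      calc V * ((T * Matrix.diagonal π * Oᵀ) * X) = M * X := by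
            simp only [hM', Matrix.mul_assoc]
        _ = 1 := hMX
    have := Matrix.inv_eq_right_inv h1
    rw [← this]
  have hBx' : Bx = V * Ax * ((T * Matrix.diagonal π * Oᵀ) * X) := by
    simp only [hBx, hP3x1, hV, Matrix.mul_assoc]
  rw [hBx', hVinv, hV, Matrix.mul_assoc]
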